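/- arXiv:2102.00338 — 2 statements merged into one kernel-verified Lean document; each statement's English description precedes it below -/
import Mathlib

section
/- In any comparison-based algorithm that correctly determines the minimum of $n$ distinct elements, the element returned as the minimum must have participated in at least $\lceil \log_2 n \rceil$ comparisons. Consequently, for a sequence consisting of $\lfloor\sqrt{k}\rfloor$ elements in arbitrary order followed by $n - \lfloor\sqrt{k}\rfloor$ larger elements in sorted order (which has at most $k$ inversions), the fragile complexity of finding the minimum is at least $\log_2 \lfloor\sqrt{k}\rfloor = \Omega(\log k)$. -/
/-- A deterministic comparison-based algorithm on `n` elements, modeled as a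
binary decision tree: each internal node compares elements at indices `i`, `j`
and branches on the outcome; each leaf returns an answer index. -/
inductive CompTree (n : ℕ) where
  | leaf (ans : Fin n) : CompTree n
  | node (i j : Fin n) (l r : CompTree n) : CompTree n

/-- Running a comparison tree on input `a` returns the answer together with the
multiset of element indices that participated in comparisons (with
multiplicity, so `(run a T).2.count x` is the number of comparisons `x`
participated in). -/
noncomputable def CompTree.run {n : ℕ} (a : Fin n → ℝ) :
    CompTree n → Fin n × Multiset (Fin n)
  | .leaf ans => (ans, 0)
  | .node i j l r =>
      let res := if a i < a j then l.run a else r.run a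
      (res.1, i ::ₘ j ::ₘ res.2)

namespace MinFragile

structure Inv (m : ℕ) {n : ℕ} (C : Finset (Fin n)) (root : Fin n → Fin n)
    (a : Fin n → ℝ) : Prop where
  inj : Function.Injective a
  sep : ∀ x ∈ C, ∀ y ∉ C, a x < a y
  rootC : ∀ x ∈ C, root x = x
  rootFree : ∀ x : Fin n, x.val < m → root x ∈ C
  nonemp : C.Nonempty
  neg : ∀ x : Fin n, x.val < m → a x < 0
  freeC : ∀ x ∈ C, x.val < m
  fixedv : ∀ x : Fin n, m ≤ x.val → a x = (x.val : ℝ)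

noncomputable def fc (m : ℕ) {n : ℕ} (root : Fin n → Fin n) (x : Fin n) : ℕ :=
  (Finset.univ.filter (fun z : Fin n => z.val < m ∧ root z = x)).card

lemma step {n : ℕ} (m : ℕ) (C : Finset (Fin n)) (root : Fin n → Fin n) (a : Fin n → ℝ)
    (inv : Inv m C root a) (p q : Fin n) (hp : p ∈ C) (hq : q ∈ C) (hpq : p ≠ q) :
    ∃ a₁ : Fin n → ℝ,
      Inv m (C.erase q) (fun x => if root x = q then p else root x) a₁ ∧
      a₁ p < a₁ q ∧
      (∀ x y : Fin n, ¬(x ∈ C ∧ y ∈ C) → (a x < a y ↔ a₁ x < a₁ y)) ∧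
      fc m (fun x => if root x = q then p else root x) p = fc m root p + fc m root q ∧
      ∀ x : Fin n, x ≠ p → x ≠ q →
        fc m (fun x => if root x = q then p else root x) x = fc m root x := by
  classical
  set u := (C.image a).max' (inv.nonemp.image a) with hudef
  set v := (insert (0:ℝ) ((Cᶜ : Finset (Fin n)).image a)).min' (Finset.insert_nonempty _ _)
    with hvdef
  obtain ⟨x₀, hx₀C, hx₀⟩ : ∃ x ∈ C, a x = u := by
    obtain ⟨x, hx, he⟩ := Finset.mem_image.mp ((C.image a).max'_mem (inv.nonemp.image a))
    exact ⟨x, hx, he⟩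
  have hule : ∀ x ∈ C, a x ≤ u := fun x hx => Finset.le_max' _ _ (Finset.mem_image_of_mem a hx)
  have hu0 : u < 0 := by rw [← hx₀]; exact inv.neg x₀ (inv.freeC x₀ hx₀C)
  have hvle : ∀ y : Fin n, y ∉ C → v ≤ a y := fun y hy =>
    Finset.min'_le _ _ (Finset.mem_insert_of_mem
      (Finset.mem_image_of_mem a (Finset.mem_compl.mpr hy)))
  have hv0 : v ≤ 0 := Finset.min'_le _ _ (Finset.mem_insert_self _ _)
  have huv : u < v := by
    have hm := (insert (0:ℝ) ((Cᶜ : Finset (Fin n)).image a)).min'_mem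
      (Finset.insert_nonempty _ _)
    rw [← hvdef] at hm
    rcases Finset.mem_insert.mp hm with h | h
    · rw [h]; exact hu0
    · obtain ⟨y, hy, hye⟩ := Finset.mem_image.mp h
      have hyC : y ∉ C := Finset.mem_compl.mp hy
      have := inv.sep x₀ hx₀C y hyC
      rw [hx₀, hye] at this; exact this
  set g := (u + v) / 2 with hgdef
  have hug : u < g := by rw [hgdef]; linarith
  have hgv : g < v := by rw [hgdef]; linarith
  have hg0 : g < 0 := lt_of_lt_of_le hgv hv0
  have hAq : Function.update a q g q = g := Function.update_self _ _ _
  have hAx : ∀ x : Fin n, x ≠ q → Function.update a q g x = a x :=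
    fun x hx => Function.update_of_ne hx _ _
  refine ⟨Function.update a q g, ?_, ?_, ?_, ?_, ?_⟩
  · constructor
    · -- injectivity
      intro x y hxy
      by_cases hx : x = q <;> by_cases hy : y = q
      · rw [hx, hy]
      · exfalso
        rw [hx, hAq, hAx y hy] at hxy
        by_cases hyC : y ∈ C
        · have := hule y hyC; linarith
        · have := hvle y hyC; linarith
      · exfalso
        rw [hy, hAq, hAx x hx] at hxy
        by_cases hxC : x ∈ C
        · have := hule x hxC; linarith
        · have := hvle x hxC; linarith
      · rw [hAx x hx, hAx y hy] at hxy; exact inv.inj hxy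
    · -- sep
      intro x hx y hy
      obtain ⟨hxq, hxC⟩ := Finset.mem_erase.mp hx
      rw [hAx x hxq]
      by_cases hyq : y = q
      · rw [hyq, hAq]
        have := hule x hxC; linarith
      · rw [hAx y hyq]
        have hyC : y ∉ C := fun hyC => hy (Finset.mem_erase.mpr ⟨hyq, hyC⟩)
        exact inv.sep x hxC y hyC
    · -- rootC
      intro x hx
      obtain ⟨hxq, hxC⟩ := Finset.mem_erase.mp hx
      rw [inv.rootC x hxC, if_neg hxq]
    · -- rootFree
      intro x hxm
      by_cases h : root x = q
      · rw [if_pos h]; exact Finset.mem_erase.mpr ⟨hpq, hp⟩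
      · rw [if_neg h]; exact Finset.mem_erase.mpr ⟨h, inv.rootFree x hxm⟩
    · exact ⟨p, Finset.mem_erase.mpr ⟨hpq, hp⟩⟩
    · -- neg
      intro x hxm
      by_cases hx : x = q
      · rw [hx, hAq]; exact hg0
      · rw [hAx x hx]; exact inv.neg x hxm
    · -- freeC
      intro x hx
      exact inv.freeC x (Finset.mem_of_mem_erase hx)
    · -- fixedv
      intro x hmx
      have hx : x ≠ q := by
        intro h; rw [h] at hmx
        exact absurd hmx (not_le.mpr (inv.freeC q hq))
      rw [hAx x hx]; exact inv.fixedv x hmx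
  · rw [hAx p hpq, hAq]
    have := hule p hp; linarith
  · -- order preservation
    intro x y hxy
    by_cases hx : x = q
    · by_cases hy : y = q
      · rw [hx, hy] at hxy
        exact absurd ⟨hq, hq⟩ hxy
      · have hyC : y ∉ C := fun hyC => hxy (by rw [hx]; exact ⟨hq, hyC⟩)
        rw [hx, hAq, hAx y hy]
        have h1 : a q < a y := inv.sep q hq y hyC
        have h2 : v ≤ a y := hvle y hyC
        exact iff_of_true h1 (by linarith)
    · by_cases hy : y = q
      · have hxC : x ∉ C := fun hxC => hxy (by rw [hy]; exact ⟨hxC, hq⟩)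
        rw [hy, hAx x hx, hAq]
        have h1 : a q < a x := inv.sep q hq x hxC
        have h2 : v ≤ a x := hvle x hxC
        exact iff_of_false (by linarith) (by linarith)
      · rw [hAx x hx, hAx y hy]
  · -- fc merge
    have hsplit : (Finset.univ.filter
        (fun z : Fin n => z.val < m ∧ (if root z = q then p else root z) = p))
        = (Finset.univ.filter (fun z : Fin n => z.val < m ∧ root z = p))
          ∪ (Finset.univ.filter (fun z : Fin n => z.val < m ∧ root z = q)) := by
      ext z
      simp only [Finset.mem_filter, Finset.mem_univ, true_and, Finset.mem_union]
      by_cases h : root z = q <;> simp [h] <;> tauto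
    have hdisj : Disjoint (Finset.univ.filter (fun z : Fin n => z.val < m ∧ root z = p))
        (Finset.univ.filter (fun z : Fin n => z.val < m ∧ root z = q)) := by
      rw [Finset.disjoint_left]
      intro z hz1 hz2
      simp only [Finset.mem_filter, Finset.mem_univ, true_and] at hz1 hz2
      exact hpq (hz1.2 ▸ hz2.2 ▸ rfl)
    show (Finset.univ.filter
        (fun z : Fin n => z.val < m ∧ (if root z = q then p else root z) = p)).card = _
    rw [hsplit, Finset.card_union_of_disjoint hdisj]; rfl
  · -- fc other
    intro x hxp hxq
    show (Finset.univ.filter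
        (fun z : Fin n => z.val < m ∧ (if root z = q then p else root z) = x)).card
      = (Finset.univ.filter (fun z : Fin n => z.val < m ∧ root z = x)).card
    congr 1
    apply Finset.filter_congr
    intro z _
    by_cases h : root z = q
    · simp [h, Ne.symm hxp, Ne.symm hxq]
    · simp [h]

lemma main {n : ℕ} (m : ℕ) (T : CompTree n) :
    ∀ (C : Finset (Fin n)) (root : Fin n → Fin n) (a : Fin n → ℝ), Inv m C root a →
    ∃ (Cf : Finset (Fin n)) (rootf : Fin n → Fin n) (af : Fin n → ℝ),
      Inv m Cf rootf af ∧ Cf ⊆ C ∧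
      (∀ x y : Fin n, ¬(x ∈ C ∧ y ∈ C) → (a x < a y ↔ af x < af y)) ∧
      (∀ a' : Fin n → ℝ,
        (∀ x y : Fin n, ¬(x ∈ Cf ∧ y ∈ Cf) → (af x < af y ↔ a' x < a' y)) →
        CompTree.run a' T = CompTree.run af T) ∧
      ((CompTree.run af T).1 ∈ Cf →
        fc m rootf (CompTree.run af T).1 ≤
          fc m root (CompTree.run af T).1 *
            2 ^ ((CompTree.run af T).2.count (CompTree.run af T).1)) := by
  classical
  induction T with
  | leaf ans =>
      intro C root a inv
      exact ⟨C, root, a, inv, subset_rfl, fun x y _ => Iff.rfl, fun a' _ => rfl,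
        fun _ => by simp [CompTree.run]⟩
  | node i j l r IHl IHr =>
      intro C root a inv
      by_cases h1 : i ≠ j ∧ i ∈ C ∧ j ∈ C
      · obtain ⟨hij, hiC, hjC⟩ := h1
        by_cases hcmp : fc m root j ≤ fc m root i
        · -- i wins the comparison (left branch)
          obtain ⟨a₁, inv₁, hlt, hop₁, hfcp, hfco⟩ := step m C root a inv i j hiC hjC hij
          obtain ⟨Cf, rootf, af, invf, hsub, hop₂, hstab, hcnt⟩ := IHl (C.erase j) _ a₁ inv₁
          have hCfC : Cf ⊆ C := hsub.trans (Finset.erase_subset _ _)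
          have hjCf : j ∉ Cf := fun hj => (Finset.mem_erase.mp (hsub hj)).1 rfl
          have hbr : af i < af j := by
            rw [← hop₂ i j (fun hh => (Finset.mem_erase.mp hh.2).1 rfl)]
            exact hlt
          have hrunaf : CompTree.run af (CompTree.node i j l r)
              = ((CompTree.run af l).1, i ::ₘ j ::ₘ (CompTree.run af l).2) := by
            simp [CompTree.run, hbr]
          refine ⟨Cf, rootf, af, invf, hCfC, ?_, ?_, ?_⟩
          · intro x y hxy
            exact (hop₁ x y hxy).trans (hop₂ x y (fun hh =>
              hxy ⟨Finset.mem_of_mem_erase hh.1, Finset.mem_of_mem_erase hh.2⟩))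
          · intro a' ho
            have hbr' : a' i < a' j := (ho i j (fun hh => hjCf hh.2)).mp hbr
            rw [hrunaf]
            simp [CompTree.run, hbr', hstab a' ho]
          · intro hw
            rw [hrunaf] at hw ⊢
            simp only at hw ⊢
            set w := (CompTree.run af l).1 with hwdef
            set cl := (CompTree.run af l).2 with hcldef
            have hbound := hcnt hw
            have hwj : w ≠ j := fun h => hjCf (h ▸ hw)
            by_cases hwi : w = i
            · rw [hwi] at hbound hw ⊢
              rw [hfcp] at hbound
              have hcount : Multiset.count i (i ::ₘ j ::ₘ cl) = Multiset.count i cl + 1 := by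
                rw [Multiset.count_cons_self, Multiset.count_cons_of_ne hij]
              rw [hcount]
              calc fc m rootf i ≤ (fc m root i + fc m root j) * 2 ^ Multiset.count i cl :=
                    hbound
                _ ≤ (fc m root i + fc m root i) * 2 ^ Multiset.count i cl :=
                    Nat.mul_le_mul_right _ (by omega)
                _ = fc m root i * 2 ^ (Multiset.count i cl + 1) := by ring
            · have hcount : Multiset.count w (i ::ₘ j ::ₘ cl) = Multiset.count w cl := by
                rw [Multiset.count_cons_of_ne hwi, Multiset.count_cons_of_ne hwj]
              rw [hcount, hfco w hwi hwj] at *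
              exact hbound
        · -- j wins the comparison (right branch)
          push_neg at hcmp
          obtain ⟨a₁, inv₁, hlt, hop₁, hfcp, hfco⟩ :=
            step m C root a inv j i hjC hiC (Ne.symm hij)
          obtain ⟨Cf, rootf, af, invf, hsub, hop₂, hstab, hcnt⟩ := IHr (C.erase i) _ a₁ inv₁
          have hCfC : Cf ⊆ C := hsub.trans (Finset.erase_subset _ _)
          have hiCf : i ∉ Cf := fun hi => (Finset.mem_erase.mp (hsub hi)).1 rfl
          have hbr0 : af j < af i := by
            rw [← hop₂ j i (fun hh => (Finset.mem_erase.mp hh.2).1 rfl)]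
            exact hlt
          have hbr : ¬ (af i < af j) := asymm hbr0
          have hrunaf : CompTree.run af (CompTree.node i j l r)
              = ((CompTree.run af r).1, i ::ₘ j ::ₘ (CompTree.run af r).2) := by
            simp [CompTree.run, hbr]
          refine ⟨Cf, rootf, af, invf, hCfC, ?_, ?_, ?_⟩
          · intro x y hxy
            exact (hop₁ x y hxy).trans (hop₂ x y (fun hh =>
              hxy ⟨Finset.mem_of_mem_erase hh.1, Finset.mem_of_mem_erase hh.2⟩))
          · intro a' ho
            have hbr0' : a' j < a' i := (ho j i (fun hh => hiCf hh.2)).mp hbr0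
            have hbr' : ¬ (a' i < a' j) := asymm hbr0'
            rw [hrunaf]
            simp [CompTree.run, hbr', hstab a' ho]
          · intro hw
            rw [hrunaf] at hw ⊢
            simp only at hw ⊢
            set w := (CompTree.run af r).1 with hwdef
            set cl := (CompTree.run af r).2 with hcldef
            have hbound := hcnt hw
            have hwi : w ≠ i := fun h => hiCf (h ▸ hw)
            by_cases hwj : w = j
            · rw [hwj] at hbound hw ⊢
              rw [hfcp] at hbound
              have hcount : Multiset.count j (i ::ₘ j ::ₘ cl) = Multiset.count j cl + 1 := by
                rw [Multiset.count_cons_of_ne (Ne.symm hij), Multiset.count_cons_self]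
              rw [hcount]
              calc fc m rootf j ≤ (fc m root j + fc m root i) * 2 ^ Multiset.count j cl :=
                    hbound
                _ ≤ (fc m root j + fc m root j) * 2 ^ Multiset.count j cl :=
                    Nat.mul_le_mul_right _ (by omega)
                _ = fc m root j * 2 ^ (Multiset.count j cl + 1) := by ring
            · have hcount : Multiset.count w (i ::ₘ j ::ₘ cl) = Multiset.count w cl := by
                rw [Multiset.count_cons_of_ne hwi, Multiset.count_cons_of_ne hwj]
              rw [hcount, hfco w hwj hwi] at *
              exact hbound
      · -- state unchanged
        by_cases hb : a i < a j
        · obtain ⟨Cf, rootf, af, invf, hsub, hop, hstab, hcnt⟩ := IHl C root a inv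
          have hnb : ¬(i ∈ C ∧ j ∈ C) := by
            intro hh
            exact h1 ⟨fun he => absurd hb (by rw [he]; exact lt_irrefl _), hh.1, hh.2⟩
          have hbr : af i < af j := (hop i j hnb).mp hb
          have hrunaf : CompTree.run af (CompTree.node i j l r)
              = ((CompTree.run af l).1, i ::ₘ j ::ₘ (CompTree.run af l).2) := by
            simp [CompTree.run, hbr]
          refine ⟨Cf, rootf, af, invf, hsub, hop, ?_, ?_⟩
          · intro a' ho
            have hbr' : a' i < a' j :=
              (ho i j (fun hh => hnb ⟨hsub hh.1, hsub hh.2⟩)).mp hbr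
            rw [hrunaf]
            simp [CompTree.run, hbr', hstab a' ho]
          · intro hw
            rw [hrunaf] at hw ⊢
            simp only at hw ⊢
            set w := (CompTree.run af l).1 with hwdef
            set cl := (CompTree.run af l).2 with hcldef
            have hbound := hcnt hw
            have hcle : Multiset.count w cl ≤ Multiset.count w (i ::ₘ j ::ₘ cl) := by
              rw [Multiset.count_cons, Multiset.count_cons]; omega
            exact hbound.trans (Nat.mul_le_mul_left _
              (Nat.pow_le_pow_right (by norm_num) hcle))
        · obtain ⟨Cf, rootf, af, invf, hsub, hop, hstab, hcnt⟩ := IHr C root a inv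
          have hbr : ¬ (af i < af j) := by
            by_cases hij : i = j
            · rw [hij]; exact lt_irrefl _
            · have hnb : ¬(i ∈ C ∧ j ∈ C) := fun hh => h1 ⟨hij, hh.1, hh.2⟩
              exact fun hh => hb ((hop i j hnb).mpr hh)
          have hrunaf : CompTree.run af (CompTree.node i j l r)
              = ((CompTree.run af r).1, i ::ₘ j ::ₘ (CompTree.run af r).2) := by
            simp [CompTree.run, hbr]
          refine ⟨Cf, rootf, af, invf, hsub, hop, ?_, ?_⟩
          · intro a' ho
            have hbr' : ¬ (a' i < a' j) := by
              by_cases hij : i = j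
              · rw [hij]; exact lt_irrefl _
              · have hnb : ¬(i ∈ Cf ∧ j ∈ Cf) := by
                  intro hh
                  exact h1 ⟨hij, hsub hh.1, hsub hh.2⟩
                exact fun hh => hbr ((ho i j hnb).mpr hh)
            rw [hrunaf]
            simp [CompTree.run, hbr', hstab a' ho]
          · intro hw
            rw [hrunaf] at hw ⊢
            simp only at hw ⊢
            set w := (CompTree.run af r).1 with hwdef
            set cl := (CompTree.run af r).2 with hcldef
            have hbound := hcnt hw
            have hcle : Multiset.count w cl ≤ Multiset.count w (i ::ₘ j ::ₘ cl) := by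
              rw [Multiset.count_cons, Multiset.count_cons]; omega
            exact hbound.trans (Nat.mul_le_mul_left _
              (Nat.pow_le_pow_right (by norm_num) hcle))

lemma card_filter_lt {n : ℕ} (m : ℕ) (h : m ≤ n) :
    (Finset.univ.filter (fun z : Fin n => z.val < m)).card = m := by
  rw [show (Finset.univ.filter (fun z : Fin n => z.val < m))
      = Finset.map (Fin.castLEEmb h) Finset.univ from ?_]
  · simp
  · ext z
    simp only [Finset.mem_filter, Finset.mem_univ, true_and, Finset.mem_map, Fin.castLEEmb,
      Function.Embedding.coeFn_mk]
    constructor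
    · intro hz; exact ⟨⟨z.val, hz⟩, rfl⟩
    · rintro ⟨y, rfl⟩; exact y.2

lemma top {n : ℕ} (m : ℕ) (hn : 1 ≤ n) (hm1 : 1 ≤ m) (hmn : m ≤ n) (T : CompTree n)
    (hcorrect : ∀ a : Fin n → ℝ, Function.Injective a →
      ∀ i : Fin n, a (T.run a).1 ≤ a i) :
    ∃ a : Fin n → ℝ, Function.Injective a ∧
      (∀ x : Fin n, x.val < m → a x < 0) ∧
      (∀ x : Fin n, m ≤ x.val → a x = (x.val : ℝ)) ∧
      m ≤ 2 ^ ((T.run a).2.count (T.run a).1) := by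
  classical
  set C₀ : Finset (Fin n) := Finset.univ.filter (fun z : Fin n => z.val < m) with hC₀
  have hC₀mem : ∀ z : Fin n, z ∈ C₀ ↔ z.val < m := by
    intro z; simp [hC₀]
  set a₀ : Fin n → ℝ := fun x => if x.val < m then (x.val : ℝ) - n else (x.val : ℝ) with ha₀
  have ha₀lt : ∀ x : Fin n, x.val < m → a₀ x = (x.val : ℝ) - n := by
    intro x hx; simp [ha₀, hx]
  have ha₀ge : ∀ x : Fin n, m ≤ x.val → a₀ x = (x.val : ℝ) := by
    intro x hx; simp [ha₀, not_lt.mpr hx]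
  have hneg₀ : ∀ x : Fin n, x.val < m → a₀ x < 0 := by
    intro x hx
    rw [ha₀lt x hx]
    have h1 : (x.val : ℝ) < n := by exact_mod_cast x.2
    linarith
  have inv₀ : Inv m C₀ id a₀ := by
    constructor
    · intro x y hxy
      by_cases hx : x.val < m <;> by_cases hy : y.val < m
      · rw [ha₀lt x hx, ha₀lt y hy] at hxy
        have : (x.val : ℝ) = y.val := by linarith
        exact Fin.ext (by exact_mod_cast this)
      · exfalso
        rw [ha₀lt x hx, ha₀ge y (not_lt.mp hy)] at hxy
        have h1 : (x.val : ℝ) < n := by exact_mod_cast x.2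
        have h2 : (0:ℝ) ≤ y.val := by positivity
        linarith
      · exfalso
        rw [ha₀ge x (not_lt.mp hx), ha₀lt y hy] at hxy
        have h1 : (y.val : ℝ) < n := by exact_mod_cast y.2
        have h2 : (0:ℝ) ≤ x.val := by positivity
        linarith
      · rw [ha₀ge x (not_lt.mp hx), ha₀ge y (not_lt.mp hy)] at hxy
        exact Fin.ext (by exact_mod_cast hxy)
    · intro x hx y hy
      rw [hC₀mem] at hx hy
      rw [ha₀ge y (not_lt.mp hy)]
      have h2 : (0:ℝ) ≤ y.val := by positivity
      have := hneg₀ x hx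
      linarith
    · intro x _; rfl
    · intro x hx; rw [hC₀mem]; exact hx
    · exact ⟨⟨0, hn⟩, by rw [hC₀mem]; exact hm1⟩
    · exact hneg₀
    · intro x hx; exact (hC₀mem x).mp hx
    · exact ha₀ge
  obtain ⟨Cf, rootf, af, invf, hsub, hop, hstab, hcnt⟩ := main m T C₀ id a₀ inv₀
  have hwCf : (CompTree.run af T).1 ∈ Cf := by
    by_contra hw
    obtain ⟨z, hz⟩ := invf.nonemp
    have hzw : af z < af (CompTree.run af T).1 := invf.sep z hz _ hw
    have := hcorrect af invf.inj z
    change af (CompTree.run af T).1 ≤ af z at this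
    linarith
  set w := (CompTree.run af T).1 with hwdef
  have hall : ∀ z : Fin n, z.val < m → rootf z = w := by
    intro z hz
    by_contra hne
    have hz0 : rootf z ∈ Cf := invf.rootFree z hz
    set z0 := rootf z with hz0def
    have hnonf : (Finset.univ.image af).Nonempty := by
      have : Nonempty (Fin n) := ⟨⟨0, hn⟩⟩
      exact Finset.Nonempty.image Finset.univ_nonempty af
    set μ := (Finset.univ.image af).min' hnonf with hμdef
    have hμ : ∀ x : Fin n, μ ≤ af x := fun x =>
      Finset.min'_le _ _ (Finset.mem_image_of_mem af (Finset.mem_univ x))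
    set a' := Function.update af z0 (μ - 1) with ha'
    have ha'z0 : a' z0 = μ - 1 := Function.update_self _ _ _
    have ha'x : ∀ x : Fin n, x ≠ z0 → a' x = af x := fun x hx => Function.update_of_ne hx _ _
    have hinj' : Function.Injective a' := by
      intro x y hxy
      by_cases hx : x = z0 <;> by_cases hy : y = z0
      · rw [hx, hy]
      · exfalso
        rw [hx, ha'z0, ha'x y hy] at hxy
        have := hμ y; linarith
      · exfalso
        rw [hy, ha'z0, ha'x x hx] at hxy
        have := hμ x; linarith
      · rw [ha'x x hx, ha'x y hy] at hxy; exact invf.inj hxy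
    have ho : ∀ x y : Fin n, ¬(x ∈ Cf ∧ y ∈ Cf) → (af x < af y ↔ a' x < a' y) := by
      intro x y hxy
      by_cases hx : x = z0
      · by_cases hy : y = z0
        · rw [hx, hy] at hxy; exact absurd ⟨hz0, hz0⟩ hxy
        · have hyC : y ∉ Cf := fun hyC => hxy (by rw [hx]; exact ⟨hz0, hyC⟩)
          rw [hx, ha'z0, ha'x y hy]
          have h1 : af z0 < af y := invf.sep z0 hz0 y hyC
          have h2 := hμ y
          exact iff_of_true h1 (by linarith)
      · by_cases hy : y = z0
        · have hxC : x ∉ Cf := fun hxC => hxy (by rw [hy]; exact ⟨hxC, hz0⟩)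
          rw [hy, ha'z0, ha'x x hx]
          have h1 : af z0 < af x := invf.sep z0 hz0 x hxC
          have h2 := hμ x
          exact iff_of_false (by linarith) (by linarith)
        · rw [ha'x x hx, ha'x y hy]
    have hrun := hstab a' ho
    have hle := hcorrect a' hinj' z0
    change a' (CompTree.run a' T).1 ≤ a' z0 at hle
    rw [hrun] at hle
    have hwz0 : w ≠ z0 := fun h => hne h.symm
    rw [ha'x w hwz0, ha'z0] at hle
    have := hμ w
    linarith
  have hwm : w.val < m := invf.freeC w hwCf
  have hfcf : fc m rootf w = m := by
    show (Finset.univ.filter (fun z : Fin n => z.val < m ∧ rootf z = w)).card = m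
    rw [show (Finset.univ.filter (fun z : Fin n => z.val < m ∧ rootf z = w))
        = (Finset.univ.filter (fun z : Fin n => z.val < m)) from ?_]
    · exact card_filter_lt m hmn
    · apply Finset.filter_congr
      intro z _
      exact ⟨fun h => h.1, fun h => ⟨h, hall z h⟩⟩
  have hfc0 : fc m id w = 1 := by
    show (Finset.univ.filter (fun z : Fin n => z.val < m ∧ z = w)).card = 1
    rw [show (Finset.univ.filter (fun z : Fin n => z.val < m ∧ z = w)) = {w} from ?_]
    · exact Finset.card_singleton w
    · ext z
      simp only [Finset.mem_filter, Finset.mem_univ, true_and, Finset.mem_singleton]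
      exact ⟨fun h => h.2, fun h => ⟨h ▸ hwm, h⟩⟩
  have hfinal := hcnt hwCf
  rw [hfcf, hfc0, one_mul] at hfinal
  exact ⟨af, invf.inj, invf.neg, invf.fixedv, hfinal⟩

end MinFragile

/-- For any correct comparison-based minimum-finding algorithm on
`n` distinct elements, there is an input forcing the returned minimum element to
participate in at least `⌈log₂ n⌉` comparisons.  Consequently, for any `k`
(with `⌊√k⌋ ≤ n`), there is an input consisting of `⌊√k⌋` elements followed by
larger sorted elements — having at most `k` inversions — on which the fragile
complexity of the minimum is at least `log₂ ⌊√k⌋ = Ω(log k)`. -/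
theorem minimum_fragile_lower_bound_inversions (n : ℕ) (hn : 1 ≤ n)
    (T : CompTree n)
    (hcorrect : ∀ a : Fin n → ℝ, Function.Injective a →
      ∀ i : Fin n, a (T.run a).1 ≤ a i) :
    (∃ a : Fin n → ℝ, Function.Injective a ∧
        Nat.clog 2 n ≤ (T.run a).2.count (T.run a).1) ∧
    ∀ k : ℕ, 1 ≤ Nat.sqrt k → Nat.sqrt k ≤ n →
      ∃ a : Fin n → ℝ, Function.Injective a ∧
        (Finset.univ.filter
          (fun p : Fin n × Fin n => p.1 < p.2 ∧ a p.2 < a p.1)).card ≤ k ∧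
        Real.logb 2 (Nat.sqrt k) ≤ ((T.run a).2.count (T.run a).1 : ℝ) := by
  constructor
  · obtain ⟨a, hinj, -, -, hpow⟩ := MinFragile.top n hn hn le_rfl T hcorrect
    exact ⟨a, hinj, (Nat.clog_le_iff_le_pow (by norm_num)).mpr hpow⟩
  · intro k hk1 hk2
    obtain ⟨a, hinj, hneg, hfix, hpow⟩ := MinFragile.top (Nat.sqrt k) hn hk1 hk2 T hcorrect
    refine ⟨a, hinj, ?_, ?_⟩
    · have hsubset : (Finset.univ.filter
          (fun p : Fin n × Fin n => p.1 < p.2 ∧ a p.2 < a p.1)) ⊆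
          (Finset.univ.filter (fun z : Fin n => z.val < Nat.sqrt k)) ×ˢ
            (Finset.univ.filter (fun z : Fin n => z.val < Nat.sqrt k)) := by
        intro p hp
        simp only [Finset.mem_filter, Finset.mem_univ, true_and] at hp
        obtain ⟨h12, hlt⟩ := hp
        have h12' : p.1.val < p.2.val := h12
        have h2 : p.2.val < Nat.sqrt k := by
          by_contra h2
          push_neg at h2
          have ha2 : a p.2 = p.2.val := hfix _ h2
          by_cases h1' : p.1.val < Nat.sqrt k
          · have hn1 := hneg _ h1'
            have hge : (0:ℝ) ≤ (p.2.val : ℝ) := by positivity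
            rw [ha2] at hlt
            linarith
          · push_neg at h1'
            rw [ha2, hfix _ h1'] at hlt
            have : (p.1.val : ℝ) < p.2.val := by exact_mod_cast h12'
            linarith
        have h1 : p.1.val < Nat.sqrt k := lt_trans h12' h2
        rw [Finset.mem_product]
        simp only [Finset.mem_filter, Finset.mem_univ, true_and]
        exact ⟨h1, h2⟩
      refine le_trans (Finset.card_le_card hsubset) ?_
      rw [Finset.card_product, MinFragile.card_filter_lt _ hk2]
      exact Nat.sqrt_le k
    · have hpow' : ((Nat.sqrt k : ℝ)) ≤ 2 ^ ((T.run a).2.count (T.run a).1) := by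
        exact_mod_cast hpow
      have h0 : (0:ℝ) < (Nat.sqrt k : ℝ) := by exact_mod_cast hk1
      calc Real.logb 2 (Nat.sqrt k)
          ≤ Real.logb 2 (2 ^ ((T.run a).2.count (T.run a).1)) :=
            Real.logb_le_logb_of_le (by norm_num) h0 hpow'
        _ = ((T.run a).2.count (T.run a).1 : ℝ) := by
            rw [Real.logb_pow]; simp [Real.logb_self_eq_one]
end

section
/- Consider $k$ sorted lists $R_1, \ldots, R_k$ (ordered so that designated 'partitioning elements' $x_{R_1} \leq \cdots \leq x_{R_k}$), where in each $R_i$ the partitioning element $x_{R_i}$ has at least $|R_i|/7$ elements of $R_i$ below it and at least $5|R_i|/7$ elements of $R_i$ above it. Let $N = \sum_i |R_i|$ and let $t$ be the largest index with $\sum_{i=1}^{t-1} |R_i| < N/8$. Then $x_{R_t}$ is smaller than at least $5N/8$ of the $N$ elements, and at least $N/56$ of the $N$ elements are smaller than $x_{R_t}$. -/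
/-- Consider `k` pairwise-disjoint sorted lists `R 0, …, R (k-1)`
with partitioning elements `x 0 ≤ ⋯ ≤ x (k-1)`, where each `x i ∈ R i` has at
least `|R i|/7` elements of `R i` below it and at least `5|R i|/7` above it.
Let `N = ∑ |R i|` and let `t` be the largest index with
`∑_{i<t} |R i| < N/8`.  Then `x t` is smaller than at least `5N/8` of the `N`
elements, and at least `N/56` of the `N` elements are smaller than `x t`. -/
theorem pivot_counting_lemma (k : ℕ) (hk : 1 ≤ k)
    (R : Fin k → Finset ℝ)
    (hdisj : ∀ i j, i ≠ j → Disjoint (R i) (R j))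
    (x : Fin k → ℝ) (hx : ∀ i, x i ∈ R i) (hmono : Monotone x)
    (hbelow : ∀ i, ((R i).card : ℝ) / 7 ≤ ((R i).filter (· < x i)).card)
    (habove : ∀ i, 5 * ((R i).card : ℝ) / 7 ≤ ((R i).filter (x i < ·)).card)
    (N : ℕ) (hN : N = ∑ i : Fin k, (R i).card)
    (t : Fin k)
    (ht : (∑ i ∈ Finset.Iio t, ((R i).card : ℝ)) < N / 8)
    (htmax : ∀ t' : Fin k, t < t' →
      ¬ (∑ i ∈ Finset.Iio t', ((R i).card : ℝ)) < N / 8) :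
    5 * (N : ℝ) / 8 ≤ ∑ i : Fin k, (((R i).filter (x t < ·)).card : ℝ) ∧
    (N : ℝ) / 56 ≤ ∑ i : Fin k, (((R i).filter (· < x t)).card : ℝ) := by
  have hNsum : (N : ℝ) = ∑ i : Fin k, ((R i).card : ℝ) := by
    rw [hN]; push_cast; ring
  -- split univ into Iio t and Ici t
  have hsplit : (N : ℝ) = (∑ i ∈ Finset.Iio t, ((R i).card : ℝ))
      + (∑ i ∈ Finset.Ici t, ((R i).card : ℝ)) := by
    rw [hNsum, ← Finset.sum_union]
    · congr 1
      ext i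
      simp [Finset.mem_Iio, Finset.mem_Ici, lt_or_ge i t]
    · intro s hs1 hs2 a ha
      have h1 := hs1 ha
      have h2 := hs2 ha
      simp only [Finset.mem_Iio] at h1
      simp only [Finset.mem_Ici] at h2
      exact absurd h2 (not_le.mpr h1)
  constructor
  · -- Part 1
    have h1 : ∀ i ∈ Finset.Ici t, 5 * ((R i).card : ℝ) / 7
        ≤ (((R i).filter (x t < ·)).card : ℝ) := by
      intro i hi
      simp only [Finset.mem_Ici] at hi
      have hsub : (R i).filter (x i < ·) ⊆ (R i).filter (x t < ·) := by
        intro a ha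
        simp only [Finset.mem_filter] at ha ⊢
        exact ⟨ha.1, lt_of_le_of_lt (hmono hi) ha.2⟩
      calc 5 * ((R i).card : ℝ) / 7 ≤ (((R i).filter (x i < ·)).card : ℝ) := habove i
        _ ≤ (((R i).filter (x t < ·)).card : ℝ) := by
            exact_mod_cast Finset.card_le_card hsub
    have h2 : ∑ i ∈ Finset.Ici t, 5 * ((R i).card : ℝ) / 7
        ≤ ∑ i ∈ Finset.Ici t, (((R i).filter (x t < ·)).card : ℝ) :=
      Finset.sum_le_sum h1
    have h3 : ∑ i ∈ Finset.Ici t, (((R i).filter (x t < ·)).card : ℝ)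
        ≤ ∑ i : Fin k, (((R i).filter (x t < ·)).card : ℝ) := by
      apply Finset.sum_le_sum_of_subset_of_nonneg (Finset.subset_univ _)
      intros; positivity
    have h4 : 7 * (N : ℝ) / 8 ≤ ∑ i ∈ Finset.Ici t, ((R i).card : ℝ) := by
      have := ht
      nlinarith [hsplit]
    have h5 : ∑ i ∈ Finset.Ici t, 5 * ((R i).card : ℝ) / 7
        = 5 / 7 * ∑ i ∈ Finset.Ici t, ((R i).card : ℝ) := by
      rw [Finset.mul_sum]; congr 1; ext i; ring
    nlinarith
  · -- Part 2
    have hIic : (N : ℝ) / 8 ≤ ∑ i ∈ Finset.Iic t, ((R i).card : ℝ) := by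
      by_cases hcase : (t : ℕ) + 1 < k
      · have t' : Fin k := ⟨(t : ℕ) + 1, hcase⟩
        have hlt : t < (⟨(t : ℕ) + 1, hcase⟩ : Fin k) := by
          rw [Fin.lt_def]; exact Nat.lt_succ_self _
        have := htmax _ hlt
        push_neg at this
        have heq : Finset.Iio (⟨(t : ℕ) + 1, hcase⟩ : Fin k) = Finset.Iic t := by
          ext i
          simp only [Finset.mem_Iio, Finset.mem_Iic, Fin.lt_def, Fin.le_def]
          exact Nat.lt_succ_iff
        rw [heq] at this
        exact this
      · have heq : Finset.Iic t = (Finset.univ : Finset (Fin k)) := by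
          ext i
          simp only [Finset.mem_Iic, Finset.mem_univ, iff_true]
          have := i.isLt
          have := t.isLt
          omega
        rw [heq, ← hNsum]
        have : (0 : ℝ) ≤ N := Nat.cast_nonneg N
        linarith
    have h1 : ∀ i ∈ Finset.Iic t, ((R i).card : ℝ) / 7
        ≤ (((R i).filter (· < x t)).card : ℝ) := by
      intro i hi
      simp only [Finset.mem_Iic] at hi
      have hsub : (R i).filter (· < x i) ⊆ (R i).filter (· < x t) := by
        intro a ha
        simp only [Finset.mem_filter] at ha ⊢
        exact ⟨ha.1, lt_of_lt_of_le ha.2 (hmono hi)⟩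
      calc ((R i).card : ℝ) / 7 ≤ (((R i).filter (· < x i)).card : ℝ) := hbelow i
        _ ≤ (((R i).filter (· < x t)).card : ℝ) := by
            exact_mod_cast Finset.card_le_card hsub
    have h2 : ∑ i ∈ Finset.Iic t, ((R i).card : ℝ) / 7
        ≤ ∑ i ∈ Finset.Iic t, (((R i).filter (· < x t)).card : ℝ) :=
      Finset.sum_le_sum h1
    have h3 : ∑ i ∈ Finset.Iic t, (((R i).filter (· < x t)).card : ℝ)
        ≤ ∑ i : Fin k, (((R i).filter (· < x t)).card : ℝ) := by
      apply Finset.sum_le_sum_of_subset_of_nonneg (Finset.subset_univ _)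
      intros; positivity
    have h5 : ∑ i ∈ Finset.Iic t, ((R i).card : ℝ) / 7
        = (1 / 7) * ∑ i ∈ Finset.Iic t, ((R i).card : ℝ) := by
      rw [Finset.mul_sum]; congr 1; ext i; ring
    nlinarith
end
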